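/- Let $\ell \in \mathbb{N}$ and let $\alpha$ be an arbitrary type (of 'anchor' vertices). Suppose that for every $i \in \mathrm{Fin}\,\ell$ we are given a base outdegree $g(i) \in \mathbb{N}$ and two arc-targets $t_1(i), t_2(i) \in \mathrm{Fin}\,\ell \oplus \alpha$, with the property that whenever a target $t_k(i)$ equals $\mathrm{inl}(j)$ for some $j \in \mathrm{Fin}\,\ell$, then $j < i$. A reorientation is a choice $\varepsilon : \mathrm{Fin}\,\ell \to \mathrm{Bool} \times \mathrm{Bool}$, where the $k$-th arc of vertex $i$ is called forward if the $k$-th component of $\varepsilon(i)$ is true and backward otherwise. Define the resulting outdegree of $i$ as $g(i)$ plus the number of forward arcs of $i$ plus the number of pairs $(j,k)$ with $j \in \mathrm{Fin}\,\ell$, $k \in \{1,2\}$, such that the $k$-th arc of $j$ is backward and $t_k(j) = \mathrm{inl}(i)$. Then for every demand function $d : \mathrm{Fin}\,\ell \to \mathbb{Z}/3\mathbb{Z}$ there exists a reorientation $\varepsilon$ such that for every $i \in \mathrm{Fin}\,\ell$ the resulting outdegree of $i$ is congruent to $d(i)$ modulo $3$. -/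

import Mathlib

open scoped Classical

noncomputable def encode3 (c : ZMod 3) : Bool × Bool :=
  if c = 0 then (false, false) else if c = 1 then (true, false) else (true, true)

lemma encode3_spec (c : ZMod 3) :
    ((if (encode3 c).1 then 1 else 0) + (if (encode3 c).2 then 1 else 0) : ZMod 3) = c := by
  unfold encode3
  rcases (show c = 0 ∨ c = 1 ∨ c = 2 by revert c; decide) with rfl | rfl | rfl <;>
    simp [show (2 : ZMod 3) ≠ 0 by decide, show (2 : ZMod 3) ≠ 1 by decide,
    show (1 : ZMod 3) ≠ 0 by decide, show (1 + 1 : ZMod 3) = 2 by decide]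

noncomputable def pick (ℓ : ℕ) {α : Type*} (g : Fin ℓ → ℕ)
    (t₁ t₂ : Fin ℓ → (Fin ℓ ⊕ α)) (d : Fin ℓ → ZMod 3) : Fin ℓ → Bool × Bool
  | i =>
    encode3 (d i - (g i : ZMod 3)
      - ((Finset.univ.filter (fun j : Fin ℓ =>
          ((if h : i < j then pick ℓ g t₁ t₂ d j else (false, false)).1 = false)
            ∧ t₁ j = Sum.inl i)).card : ZMod 3)
      - ((Finset.univ.filter (fun j : Fin ℓ =>
          ((if h : i < j then pick ℓ g t₁ t₂ d j else (false, false)).2 = false)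
            ∧ t₂ j = Sum.inl i)).card : ZMod 3))
  termination_by i => ℓ - i.val
  decreasing_by all_goals exact Nat.sub_lt_sub_left i.isLt h

open scoped Classical in
/-- reorienting the two `B`-arcs of each vertex (each heading to a
strictly earlier vertex or to an anchor in `α`) so that every vertex attains any
prescribed outdegree residue mod 3. -/
theorem reorient_two_arcs (ℓ : ℕ) (α : Type*) (g : Fin ℓ → ℕ)
    (t₁ t₂ : Fin ℓ → (Fin ℓ ⊕ α))
    (h₁ : ∀ i j, t₁ i = Sum.inl j → j < i)
    (h₂ : ∀ i j, t₂ i = Sum.inl j → j < i)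
    (d : Fin ℓ → ZMod 3) :
    ∃ ε : Fin ℓ → Bool × Bool, ∀ i : Fin ℓ,
      ((g i
        + (if (ε i).1 then 1 else 0) + (if (ε i).2 then 1 else 0)
        + (Finset.univ.filter (fun j : Fin ℓ => (ε j).1 = false ∧ t₁ j = Sum.inl i)).card
        + (Finset.univ.filter (fun j : Fin ℓ => (ε j).2 = false ∧ t₂ j = Sum.inl i)).card
        : ℕ) : ZMod 3) = d i := by
  refine ⟨pick ℓ g t₁ t₂ d, fun i => ?_⟩
  have hf₁ : (Finset.univ.filter (fun j : Fin ℓ =>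
      ((if h : i < j then pick ℓ g t₁ t₂ d j else (false, false)).1 = false)
        ∧ t₁ j = Sum.inl i))
      = (Finset.univ.filter (fun j : Fin ℓ =>
        (pick ℓ g t₁ t₂ d j).1 = false ∧ t₁ j = Sum.inl i)) := by
    apply Finset.filter_congr
    intro j _
    by_cases ht : t₁ j = Sum.inl i
    · have : i < j := h₁ j i ht
      simp [this, ht]
    · simp [ht]
  have hf₂ : (Finset.univ.filter (fun j : Fin ℓ =>
      ((if h : i < j then pick ℓ g t₁ t₂ d j else (false, false)).2 = false)
        ∧ t₂ j = Sum.inl i))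
      = (Finset.univ.filter (fun j : Fin ℓ =>
        (pick ℓ g t₁ t₂ d j).2 = false ∧ t₂ j = Sum.inl i)) := by
    apply Finset.filter_congr
    intro j _
    by_cases ht : t₂ j = Sum.inl i
    · have : i < j := h₂ j i ht
      simp [this, ht]
    · simp [ht]
  have hpick : pick ℓ g t₁ t₂ d i
      = encode3 (d i - (g i : ZMod 3)
        - ((Finset.univ.filter (fun j : Fin ℓ =>
            (pick ℓ g t₁ t₂ d j).1 = false ∧ t₁ j = Sum.inl i)).card : ZMod 3)
        - ((Finset.univ.filter (fun j : Fin ℓ =>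
            (pick ℓ g t₁ t₂ d j).2 = false ∧ t₂ j = Sum.inl i)).card : ZMod 3)) := by
    rw [pick, hf₁, hf₂]
  have := encode3_spec (d i - (g i : ZMod 3)
        - ((Finset.univ.filter (fun j : Fin ℓ =>
            (pick ℓ g t₁ t₂ d j).1 = false ∧ t₁ j = Sum.inl i)).card : ZMod 3)
        - ((Finset.univ.filter (fun j : Fin ℓ =>
            (pick ℓ g t₁ t₂ d j).2 = false ∧ t₂ j = Sum.inl i)).card : ZMod 3))
  rw [← hpick] at this
  push_cast
  linear_combination this
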